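/- arXiv:2512.01226 — 3 statements merged into one kernel-verified Lean document; each statement's English description precedes it below -/
import Mathlib

section
/- Every nonnegative integer n×n matrix whose row sums and column sums all equal k can be written as a sum of k permutation matrices. -/
/-- Integer Birkhoff–von Neumann: a nonnegative integer square matrix whose row
and column sums all equal `k` is a sum of `k` permutation matrices. -/
theorem stmt8 {n k : ℕ} (M : Matrix (Fin n) (Fin n) ℕ)
    (hrow : ∀ i, ∑ j, M i j = k) (hcol : ∀ j, ∑ i, M i j = k) :
    ∃ ρ : Fin k → Equiv.Perm (Fin n),
      ∀ i j, M i j = ∑ m, if (ρ m) i = j then 1 else 0 := by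
  induction k generalizing M with
  | zero =>
    refine ⟨fun m => m.elim0, fun i j => ?_⟩
    have h := hrow i
    rw [Finset.sum_eq_zero_iff] at h
    simpa using h j (Finset.mem_univ j)
  | succ k ih =>
    classical
    -- Hall's condition
    set t : Fin n → Finset (Fin n) := fun i => Finset.univ.filter (fun j => 0 < M i j) with ht
    have hall : ∀ s : Finset (Fin n), s.card ≤ (s.biUnion t).card := by
      intro s
      have h1 : s.card * (k + 1) = ∑ i ∈ s, ∑ j, M i j := by
        simp [hrow, Finset.sum_const, mul_comm]
      have h2 : ∀ i ∈ s, ∑ j, M i j = ∑ j ∈ s.biUnion t, M i j := by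
        intro i hi
        rw [← Finset.sum_subset (Finset.subset_univ (s.biUnion t))]
        intro j _ hj
        by_contra hne
        exact hj (Finset.mem_biUnion.2 ⟨i, hi, by simp [ht, Nat.pos_of_ne_zero hne]⟩)
      have h3 : ∑ i ∈ s, ∑ j ∈ s.biUnion t, M i j ≤ ∑ i, ∑ j ∈ s.biUnion t, M i j :=
        Finset.sum_le_sum_of_subset (Finset.subset_univ s)
      have h4 : ∑ i, ∑ j ∈ s.biUnion t, M i j = (s.biUnion t).card * (k + 1) := by
        refine Finset.sum_comm.trans ?_
        simp [hcol, Finset.sum_const, mul_comm]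
      have : s.card * (k + 1) ≤ (s.biUnion t).card * (k + 1) := by
        rw [h1, Finset.sum_congr rfl h2, ← h4] at *
        exact h3
      exact Nat.le_of_mul_le_mul_right this (Nat.succ_pos k)
    obtain ⟨f, hfinj, hf⟩ := (Finset.all_card_le_biUnion_card_iff_exists_injective t).1 hall
    have hfbij : Function.Bijective f := Finite.injective_iff_bijective.1 hfinj
    let σ : Equiv.Perm (Fin n) := Equiv.ofBijective f hfbij
    have hσ : ∀ i, 0 < M i (σ i) := by
      intro i
      have := hf i
      simp only [ht, Finset.mem_filter] at this
      exact this.2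
    have hle : ∀ i j, (if σ i = j then 1 else 0) ≤ M i j := by
      intro i j
      split
      · next h => exact h ▸ hσ i
      · exact Nat.zero_le _
    set M' : Matrix (Fin n) (Fin n) ℕ :=
      fun i j => M i j - (if σ i = j then 1 else 0) with hM'
    have hrow' : ∀ i, ∑ j, M' i j = k := by
      intro i
      simp only [hM']
      rw [Finset.sum_tsub_distrib Finset.univ (fun j _ => hle i j)]
      simp [hrow i]
    have hcol' : ∀ j, ∑ i, M' i j = k := by
      intro j
      simp only [hM']
      rw [Finset.sum_tsub_distrib Finset.univ (fun i _ => hle i j)]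
      have : ∑ i, (if σ i = j then 1 else 0) = 1 := by
        simp only [Equiv.apply_eq_iff_eq_symm_apply]
        simp
      rw [this, hcol j]; omega
    obtain ⟨ρ, hρ⟩ := ih M' hrow' hcol'
    refine ⟨Fin.cons σ ρ, fun i j => ?_⟩
    rw [Fin.sum_univ_succ]
    simp only [Fin.cons_zero, Fin.cons_succ]
    rw [← hρ i j, hM']
    exact (Nat.add_sub_cancel' (hle i j)).symm
end

section
/- Suppose Φ(z, λ) satisfies Φ(z, λ) = Φ(z^{-1}, λ) and is monic of degree m in λ. If for a 2-torsion point z_0 ∈ {±1}^d all roots of λ ↦ Φ(z_0, λ) together give m points (with multiplicity) and the critical point equations Φ = z_1 ∂Φ/∂z_1 = ... = z_d ∂Φ/∂z_d = 0 have finitely many solutions, then there are at least 2^d · m critical points counted with multiplicity. -/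
/-- Evaluation of a Laurent polynomial at a point of the torus. -/
noncomputable def evalAt {n : ℕ} (f : AddMonoidAlgebra ℂ (Fin n → ℤ)) (x : Fin n → ℂˣ) : ℂ :=
  ∑ a ∈ f.coeff.support, f.coeff a * ∏ i, (x i : ℂ) ^ a i

/-- The logarithmic derivative `z_i ∂/∂z_i` on Laurent polynomials. -/
noncomputable def logDeriv' {n : ℕ} (i : Fin n) (f : AddMonoidAlgebra ℂ (Fin n → ℤ)) :
    AddMonoidAlgebra ℂ (Fin n → ℤ) :=
  ∑ a ∈ f.coeff.support, AddMonoidAlgebra.single a ((a i : ℂ) * f.coeff a)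

/-- The univariate polynomial in `λ` obtained from `Φ` by evaluating its Laurent
polynomial coefficients at `z`. -/
noncomputable def fiberPoly {d : ℕ} (Φ : Polynomial (AddMonoidAlgebra ℂ (Fin d → ℤ)))
    (z : Fin d → ℂˣ) : Polynomial ℂ :=
  ∑ k ∈ Φ.support, Polynomial.C (evalAt (Φ.coeff k) z) * Polynomial.X ^ k

/-- `(z, l)` is a critical point: `Φ(z,l) = 0` and `z_i ∂Φ/∂z_i (z,l) = 0` for all `i`. -/
def IsCritical {d : ℕ} (Φ : Polynomial (AddMonoidAlgebra ℂ (Fin d → ℤ)))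
    (z : Fin d → ℂˣ) (l : ℂ) : Prop :=
  (fiberPoly Φ z).eval l = 0 ∧
    ∀ i : Fin d,
      (∑ k ∈ Φ.support, Polynomial.C (evalAt (logDeriv' i (Φ.coeff k)) z)
          * Polynomial.X ^ k).eval l = 0

/-- The inclusion of `{±1}` into `ℂ^×`. -/
noncomputable def cu : ℤˣ →* ℂˣ := Units.map (Int.castRingHom ℂ).toMonoidHom

/-- character -/
noncomputable def chi {n : ℕ} (a : Fin n → ℤ) : (Fin n → ℂˣ) →* ℂ where
  toFun x := ∏ i, (x i : ℂ) ^ a i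
  map_one' := by simp
  map_mul' x y := by
    simp only [Pi.mul_apply, Units.val_mul]
    rw [← Finset.prod_mul_distrib]
    exact Finset.prod_congr rfl fun i _ => mul_zpow _ _ _

lemma chi_apply {n : ℕ} (a : Fin n → ℤ) (x : Fin n → ℂˣ) :
    chi a x = ∏ i, (x i : ℂ) ^ a i := rfl

lemma chi_injective {n : ℕ} : Function.Injective (chi (n := n)) := by
  intro a b hab
  funext i
  set u : ℂˣ := Units.mk0 2 two_ne_zero with hu
  have h2 : (u : ℂ) = (2:ℂ) := rfl
  have := DFunLike.congr_fun hab (Function.update (1 : Fin n → ℂˣ) i u)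
  simp only [chi_apply] at this
  have key : ∀ c : Fin n → ℤ,
      (∏ j, ((Function.update (1 : Fin n → ℂˣ) i u j : ℂ)) ^ c j) = (2:ℂ) ^ c i := by
    intro c
    rw [Finset.prod_eq_single i]
    · simp [h2]
    · intro j _ hj; simp [Function.update_of_ne hj]
    · simp
  rw [key a, key b] at this
  have h2' : ((2:ℝ):ℂ) = (2:ℂ) := by norm_num
  rw [← h2', ← Complex.ofReal_zpow, ← Complex.ofReal_zpow] at this
  exact zpow_right_injective₀ (by norm_num : (0:ℝ) < 2) (by norm_num)
    (Complex.ofReal_injective this)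

lemma evalAt_eq_sum_subset {n : ℕ} {f : AddMonoidAlgebra ℂ (Fin n → ℤ)}
    {S : Finset (Fin n → ℤ)} (h : f.coeff.support ⊆ S) (x : Fin n → ℂˣ) :
    evalAt f x = ∑ a ∈ S, f.coeff a * chi a x :=
  Finset.sum_subset h (fun a _ ha => by
    rw [Finsupp.notMem_support_iff.mp ha, zero_mul])

lemma evalAt_def' {n : ℕ} (f : AddMonoidAlgebra ℂ (Fin n → ℤ)) (x : Fin n → ℂˣ) :
    evalAt f x = ∑ a ∈ f.coeff.support, f.coeff a * chi a x := rfl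

noncomputable def evalHom {n : ℕ} (x : Fin n → ℂˣ) : AddMonoidAlgebra ℂ (Fin n → ℤ) →+ ℂ where
  toFun f := evalAt f x
  map_zero' := by simp [evalAt]
  map_add' f g := by
    classical
    show evalAt (f + g) x = evalAt f x + evalAt g x
    rw [evalAt_eq_sum_subset (S := f.coeff.support ∪ g.coeff.support)
        (by rw [AddMonoidAlgebra.coeff_add]; exact Finsupp.support_add) x,
      evalAt_eq_sum_subset (S := f.coeff.support ∪ g.coeff.support) (Finset.subset_union_left) x,
      evalAt_eq_sum_subset (S := f.coeff.support ∪ g.coeff.support) (Finset.subset_union_right) x,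
      ← Finset.sum_add_distrib]
    exact Finset.sum_congr rfl fun a _ => by rw [AddMonoidAlgebra.coeff_add, Finsupp.add_apply, add_mul]

lemma evalAt_single {n : ℕ} (a : Fin n → ℤ) (c : ℂ) (x : Fin n → ℂˣ) :
    evalAt (AddMonoidAlgebra.single a c) x = c * chi a x := by
  rw [evalAt_eq_sum_subset (S := {a})
      (by rw [AddMonoidAlgebra.coeff_single]; exact Finsupp.support_single_subset),
    Finset.sum_singleton, AddMonoidAlgebra.coeff_single, Finsupp.single_eq_same]

lemma evalAt_logDeriv {n : ℕ} (i : Fin n) (f : AddMonoidAlgebra ℂ (Fin n → ℤ))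
    (x : Fin n → ℂˣ) :
    evalAt (logDeriv' i f) x = ∑ a ∈ f.coeff.support, (a i : ℂ) * f.coeff a * chi a x := by
  have : evalAt (logDeriv' i f) x = evalHom x (logDeriv' i f) := rfl
  rw [this, logDeriv', map_sum]
  exact Finset.sum_congr rfl fun a _ => by
    show evalAt _ _ = _
    rw [evalAt_single]

/-- eval at inverse point equals eval of neg-reflected Laurent polynomial -/
lemma evalAt_neg_reflect {n : ℕ} (f : AddMonoidAlgebra ℂ (Fin n → ℤ)) (x : Fin n → ℂˣ) :
    evalAt (AddMonoidAlgebra.ofCoeff (Finsupp.equivMapDomain (Equiv.neg _) f.coeff)) x =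
      evalAt f (fun j => (x j)⁻¹) := by
  classical
  have hsupp : (AddMonoidAlgebra.ofCoeff
      (Finsupp.equivMapDomain (Equiv.neg (Fin n → ℤ)) f.coeff)).coeff.support ⊆
      f.coeff.support.image (fun a => -a) := by
    rw [AddMonoidAlgebra.coeff_ofCoeff, Finsupp.equivMapDomain_eq_mapDomain]
    exact Finsupp.mapDomain_support
  rw [evalAt_eq_sum_subset hsupp, Finset.sum_image (fun a _ b _ h => neg_injective h),
    evalAt_def']
  refine Finset.sum_congr rfl fun a _ => ?_
  have h1 : (AddMonoidAlgebra.ofCoeff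
      (Finsupp.equivMapDomain (Equiv.neg (Fin n → ℤ)) f.coeff)).coeff (-a) = f.coeff a := by
    rw [AddMonoidAlgebra.coeff_ofCoeff, Finsupp.equivMapDomain_apply]; simp
  rw [h1, chi_apply, chi_apply]
  refine congrArg _ (Finset.prod_congr rfl fun j _ => ?_)
  rw [Pi.neg_apply, zpow_neg, ← inv_zpow]
  norm_num

lemma evalAt_ext {n : ℕ} {f g : AddMonoidAlgebra ℂ (Fin n → ℤ)}
    (h : ∀ x, evalAt f x = evalAt g x) : f = g := by
  classical
  have li : LinearIndependent ℂ ((fun φ : (Fin n → ℂˣ) →* ℂ => (φ : (Fin n → ℂˣ) → ℂ)) ∘ chi) :=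
    (linearIndependent_monoidHom (Fin n → ℂˣ) ℂ).comp chi chi_injective
  have hz : ∀ x, evalAt (f - g) x = 0 := by
    intro x
    have : evalAt (f - g) x = evalHom x (f - g) := rfl
    rw [this, map_sub]
    show evalAt f x - evalAt g x = 0
    rw [h x, sub_self]
  have hsum : ∑ a ∈ (f - g).coeff.support,
      (f - g).coeff a • ((fun φ : (Fin n → ℂˣ) →* ℂ => (φ : (Fin n → ℂˣ) → ℂ)) ∘ chi) a = 0 := by
    funext x
    rw [Finset.sum_apply]
    simp only [Pi.smul_apply, Function.comp_apply, smul_eq_mul, Pi.zero_apply]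
    rw [← evalAt_def']
    exact hz x
  have := linearIndependent_iff'.mp li (f - g).coeff.support (f - g).coeff hsum
  have hfg : f - g = 0 := by
    apply AddMonoidAlgebra.coeff_injective
    ext a
    by_cases ha : a ∈ (f - g).coeff.support
    · exact this a ha
    · exact Finsupp.notMem_support_iff.mp ha
  exact sub_eq_zero.mp hfg

lemma coeff_fiberPoly {d : ℕ} (Φ : Polynomial (AddMonoidAlgebra ℂ (Fin d → ℤ)))
    (z : Fin d → ℂˣ) (k : ℕ) :
    (fiberPoly Φ z).coeff k = evalAt (Φ.coeff k) z := by
  classical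
  rw [fiberPoly, Polynomial.finset_sum_coeff]
  simp only [Polynomial.coeff_C_mul, Polynomial.coeff_X_pow, mul_ite, mul_one, mul_zero]
  rw [Finset.sum_ite_eq Φ.support k (fun k => evalAt (Φ.coeff k) z)]
  by_cases hk : k ∈ Φ.support
  · rw [if_pos hk]
  · rw [if_neg hk, Polynomial.notMem_support_iff.mp hk]
    show (0:ℂ) = evalHom z 0
    rw [map_zero]

/-- From the global symmetry, each Laurent coefficient is invariant under negation. -/
lemma coeff_neg_symm {d : ℕ} {Φ : Polynomial (AddMonoidAlgebra ℂ (Fin d → ℤ))}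
    (hsym : ∀ z : Fin d → ℂˣ, fiberPoly Φ z = fiberPoly Φ (fun j => (z j)⁻¹))
    (k : ℕ) (a : Fin d → ℤ) : (Φ.coeff k).coeff (-a) = (Φ.coeff k).coeff a := by
  have heq : AddMonoidAlgebra.ofCoeff
      (Finsupp.equivMapDomain (Equiv.neg _) (Φ.coeff k).coeff) = Φ.coeff k := by
    apply evalAt_ext
    intro x
    rw [evalAt_neg_reflect]
    have := congrArg (fun p => Polynomial.coeff p k) (hsym x)
    simpa only [coeff_fiberPoly] using this.symm
  have := DFunLike.congr_fun (congrArg AddMonoidAlgebra.coeff heq) a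
  rw [AddMonoidAlgebra.coeff_ofCoeff, Finsupp.equivMapDomain_apply] at this
  simpa using this

lemma cu_val_inv (u : ℤˣ) : ((cu u : ℂˣ) : ℂ)⁻¹ = ((cu u : ℂˣ) : ℂ) := by
  have h : ((cu u : ℂˣ) : ℂ) * ((cu u : ℂˣ) : ℂ) = 1 := by
    have : ((cu u * cu u : ℂˣ) : ℂ) = ((cu (u * u) : ℂˣ) : ℂ) := by rw [map_mul]
    rw [Units.val_mul] at this
    rw [this, Int.units_mul_self u, map_one, Units.val_one]
  exact inv_eq_of_mul_eq_one_right h ▸ (inv_eq_of_mul_eq_one_right h).symm ▸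
    (inv_eq_of_mul_eq_one_right h)

lemma chi_neg_corner {d : ℕ} (a : Fin d → ℤ) (s : Fin d → ℤˣ) :
    chi (-a) (fun i => cu (s i)) = chi a (fun i => cu (s i)) := by
  rw [chi_apply, chi_apply]
  refine Finset.prod_congr rfl fun j _ => ?_
  rw [Pi.neg_apply, zpow_neg, ← inv_zpow, cu_val_inv]

lemma corner_logDeriv_zero {d : ℕ} (f : AddMonoidAlgebra ℂ (Fin d → ℤ))
    (hf : ∀ a, f.coeff (-a) = f.coeff a) (s : Fin d → ℤˣ) (i : Fin d) :
    evalAt (logDeriv' i f) (fun j => cu (s j)) = 0 := by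
  classical
  rw [evalAt_logDeriv]
  have hmem : ∀ a ∈ f.coeff.support, -a ∈ f.coeff.support := by
    intro a ha
    rw [Finsupp.mem_support_iff] at ha ⊢
    rw [hf a]; exact ha
  have h1 : ∑ a ∈ f.coeff.support, (a i : ℂ) * f.coeff a * chi a (fun j => cu (s j)) =
      ∑ a ∈ f.coeff.support, ((-a) i : ℂ) * f.coeff (-a) * chi (-a) (fun j => cu (s j)) := by
    refine Finset.sum_nbij' (fun a => -a) (fun a => -a) hmem hmem ?_ ?_ ?_
    · intro a _; simp
    · intro a _; simp
    · intro a _; simp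
  have h2 : ∑ a ∈ f.coeff.support, ((-a) i : ℂ) * f.coeff (-a) * chi (-a) (fun j => cu (s j)) =
      -∑ a ∈ f.coeff.support, (a i : ℂ) * f.coeff a * chi a (fun j => cu (s j)) := by
    rw [← Finset.sum_neg_distrib]
    refine Finset.sum_congr rfl fun a _ => ?_
    rw [hf a, chi_neg_corner a s, Pi.neg_apply]
    push_cast
    ring
  have h3 := h1.trans h2
  have h4 : (∑ a ∈ f.coeff.support, (a i : ℂ) * f.coeff a * chi a (fun j => cu (s j))) +
      (∑ a ∈ f.coeff.support, (a i : ℂ) * f.coeff a * chi a (fun j => cu (s j))) = 0 := by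
    nth_rewrite 2 [h3]
    rw [add_neg_cancel]
  exact add_self_eq_zero.mp h4

/-- If `Φ(z,λ)` is monic of degree `m` in `λ` with `Φ(z,λ) = Φ(z⁻¹,λ)`, if over each
2-torsion (corner) point the fiber polynomial has `m` roots counted with multiplicity,
and if the critical point equations have finitely many solutions, then every fiber
root over a corner point is a critical point, giving at least `2^d · m` critical
points counted with multiplicity. -/
theorem stmt14 {d m : ℕ} (Φ : Polynomial (AddMonoidAlgebra ℂ (Fin d → ℤ)))
    (hmonic : Φ.Monic) (hdeg : Φ.natDegree = m)
    (hsym : ∀ z : Fin d → ℂˣ, fiberPoly Φ z = fiberPoly Φ (fun j => (z j)⁻¹))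
    (hroots : ∀ s : Fin d → ℤˣ,
      Multiset.card (fiberPoly Φ (fun i => cu (s i))).roots = m)
    (hfin : {p : (Fin d → ℂˣ) × ℂ | IsCritical Φ p.1 p.2}.Finite) :
    (∀ s : Fin d → ℤˣ, ∀ μ ∈ (fiberPoly Φ (fun i => cu (s i))).roots,
        IsCritical Φ (fun i => cu (s i)) μ) ∧
      2 ^ d * m ≤ ∑ s : Fin d → ℤˣ,
        Multiset.card (fiberPoly Φ (fun i => cu (s i))).roots := by
  constructor
  · intro s μ hμ
    constructor
    · exact (Polynomial.mem_roots'.mp hμ).2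
    · intro i
      have hz : ∀ k ∈ Φ.support,
          evalAt (logDeriv' i (Φ.coeff k)) (fun j => cu (s j)) = 0 := fun k _ =>
        corner_logDeriv_zero (Φ.coeff k) (coeff_neg_symm hsym k) s i
      rw [Finset.sum_congr rfl fun k hk => by rw [hz k hk]]
      simp
  · rw [Finset.sum_congr rfl fun s _ => hroots s, Finset.sum_const, Finset.card_univ]
    classical
    rw [Fintype.card_fun, Fintype.card_units_int, Fintype.card_fin, smul_eq_mul]
end

section
/- Let f be a Laurent polynomial in t = (t_1,...,t_n) with support A, let F be a face of the Newton polytope conv(A) with F ∩ A = 𝓕, and let M_𝓕 = N{a − b : a ∈ A, b ∈ 𝓕} be the associated affine monoid. Then for any b ∈ 𝓕, t^{−b} f lies in the monoid algebra C[M_𝓕], and the ideal generated by f in C[Z^n] intersected with C[M_𝓕] is the principal ideal of C[M_𝓕] generated by t^{−b} f. -/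
open Finset AddMonoidAlgebra


/-- Weight of an exponent vector with respect to η. -/
def wt {n : ℕ} (η a : Fin n → ℤ) : ℤ := ∑ i, η i * a i

/-- The affine monoid `M_𝓕 = ℕ{a − b : a ∈ A, b ∈ 𝓕}` associated to a subset
`𝓕 ⊆ A` of lattice points. -/
def Mface {n : ℕ} (A F : Finset (Fin n → ℤ)) : AddSubmonoid (Fin n → ℤ) :=
  AddSubmonoid.closure {x : Fin n → ℤ | ∃ a ∈ A, ∃ b ∈ F, x = a - b}

lemma wt_add' {n : ℕ} (η a b : Fin n → ℤ) : wt η (a + b) = wt η a + wt η b := by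
  simp [wt, mul_add, Finset.sum_add_distrib]

lemma wt_zero' {n : ℕ} (η : Fin n → ℤ) : wt η 0 = 0 := by simp [wt]

/-- The weight-`w` part of a Laurent polynomial. -/
noncomputable def wpart {n : ℕ} (η : Fin n → ℤ) (w : ℤ)
    (p : AddMonoidAlgebra ℂ (Fin n → ℤ)) : AddMonoidAlgebra ℂ (Fin n → ℤ) :=
  haveI : DecidablePred (fun x : Fin n → ℤ => wt η x = w) := fun _ => Int.decEq _ _
  AddMonoidAlgebra.ofCoeff (Finsupp.filter (fun x => wt η x = w) p.coeff)

lemma wpart_apply_pos {n : ℕ} (η : Fin n → ℤ) (w : ℤ) (p : AddMonoidAlgebra ℂ (Fin n → ℤ))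
    {x : Fin n → ℤ} (hx : wt η x = w) : (wpart η w p).coeff x = p.coeff x := by
  classical exact Finsupp.filter_apply_pos _ _ hx

lemma wpart_apply_neg {n : ℕ} (η : Fin n → ℤ) (w : ℤ) (p : AddMonoidAlgebra ℂ (Fin n → ℤ))
    {x : Fin n → ℤ} (hx : wt η x ≠ w) : (wpart η w p).coeff x = 0 := by
  classical exact Finsupp.filter_apply_neg _ _ hx

lemma support_wpart {n : ℕ} (η : Fin n → ℤ) (w : ℤ) (p : AddMonoidAlgebra ℂ (Fin n → ℤ)) :
    ∀ x ∈ (wpart η w p).coeff.support, x ∈ p.coeff.support ∧ wt η x = w := by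
  intro x hx
  have hne := Finsupp.mem_support_iff.mp hx
  by_cases hw : wt η x = w
  · refine ⟨Finsupp.mem_support_iff.mpr fun h0 => hne ?_, hw⟩
    rw [wpart_apply_pos η w p hw, h0]
  · exact absurd (wpart_apply_neg η w p hw) hne

lemma support_sub_wpart {n : ℕ} (η : Fin n → ℤ) (w : ℤ) (p : AddMonoidAlgebra ℂ (Fin n → ℤ)) :
    ∀ x ∈ (p - wpart η w p).coeff.support, x ∈ p.coeff.support ∧ wt η x ≠ w := by
  intro x hx
  have hne : p.coeff x - (wpart η w p).coeff x ≠ 0 := Finsupp.mem_support_iff.mp hx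
  by_cases hw : wt η x = w
  · rw [wpart_apply_pos η w p hw, sub_self] at hne; exact absurd rfl hne
  · refine ⟨Finsupp.mem_support_iff.mpr fun h0 => hne ?_, hw⟩
    rw [h0, wpart_apply_neg η w p hw, sub_self]

lemma mem_support_mul {n : ℕ} {x y : AddMonoidAlgebra ℂ (Fin n → ℤ)} {e : Fin n → ℤ}
    (he : e ∈ (x * y).coeff.support) :
    ∃ u ∈ x.coeff.support, ∃ v ∈ y.coeff.support, e = u + v := by
  classical
  obtain ⟨u, hu, v, hv, huv⟩ := Finset.mem_add.mp (AddMonoidAlgebra.support_coeff_mul_subset x y he)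
  exact ⟨u, hu, v, hv, huv.symm⟩

lemma key {n : ℕ} (η : Fin n → ℤ) (M : AddSubmonoid (Fin n → ℤ))
    (q : AddMonoidAlgebra ℂ (Fin n → ℤ))
    (hq0 : ∀ d ∈ q.coeff.support, 0 ≤ wt η d)
    (hqz : (0 : Fin n → ℤ) ∈ q.coeff.support)
    (hunit : ∀ d ∈ q.coeff.support, wt η d = 0 → -d ∈ M)
    (hqM : ∀ d ∈ q.coeff.support, d ∈ M) :
    ∀ N (p : AddMonoidAlgebra ℂ (Fin n → ℤ)), p.coeff.support.card ≤ N →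
      (∀ m ∈ (p * q).coeff.support, m ∈ M) → ∀ a ∈ p.coeff.support, a ∈ M := by
  classical
  intro N
  induction N with
  | zero => intro p hp _ a ha; simp [Finset.card_eq_zero.mp (Nat.le_zero.mp hp)] at ha
  | succ N ih =>
    intro p hcard hpq
    by_cases hp : p = 0
    · simp [hp]
    have hS : (p.coeff.support.image (wt η)).Nonempty := by
      simpa using Finsupp.support_nonempty_iff.mpr (AddMonoidAlgebra.coeff_eq_zero.not.mpr hp)
    set w₀ := (p.coeff.support.image (wt η)).min' hS with hw₀
    have hwmin : ∀ x ∈ p.coeff.support, w₀ ≤ wt η x := fun x hx =>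
      Finset.min'_le _ _ (Finset.mem_image_of_mem _ hx)
    have step : ∃ a ∈ p.coeff.support, a ∈ M := by
      have hp₀ne : wpart η w₀ p ≠ 0 := by
        obtain ⟨a, ha, haw⟩ := Finset.mem_image.mp (Finset.min'_mem _ hS)
        intro h0
        have h1 : (wpart η w₀ p).coeff a = p.coeff a := wpart_apply_pos _ _ _ haw
        rw [h0] at h1
        exact (Finsupp.mem_support_iff.mp ha) h1.symm
      have hq₀ne : wpart η 0 q ≠ 0 := by
        intro h0
        have h1 : (wpart η 0 q).coeff 0 = q.coeff 0 := wpart_apply_pos _ _ _ (wt_zero' η)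
        rw [h0] at h1
        exact (Finsupp.mem_support_iff.mp hqz) h1.symm
      have hprodne : wpart η w₀ p * wpart η 0 q ≠ 0 := mul_ne_zero hp₀ne hq₀ne
      obtain ⟨e, he⟩ := Finsupp.support_nonempty_iff.mpr (AddMonoidAlgebra.coeff_eq_zero.not.mpr hprodne)
      obtain ⟨a, ha, d, hd, rfl⟩ := mem_support_mul he
      obtain ⟨hap, haw⟩ := support_wpart η w₀ p a ha
      obtain ⟨hdq, hdw⟩ := support_wpart η 0 q d hd
      have hsplit : p * q = wpart η w₀ p * wpart η 0 q +
          (wpart η w₀ p * (q - wpart η 0 q) + (p - wpart η w₀ p) * q) := by ring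
      have hz1 : (wpart η w₀ p * (q - wpart η 0 q)).coeff (a + d) = 0 := by
        by_contra hne
        obtain ⟨u, hu, v, hv, huv⟩ := mem_support_mul (Finsupp.mem_support_iff.mpr hne)
        obtain ⟨huq, huw⟩ := support_wpart η w₀ p u hu
        obtain ⟨hvq, hvw⟩ := support_sub_wpart η 0 q v hv
        have h1 : wt η (a + d) = wt η u + wt η v := by rw [huv, wt_add']
        rw [wt_add', haw, hdw, huw] at h1
        have hvpos := hq0 v hvq
        omega
      have hz2 : ((p - wpart η w₀ p) * q).coeff (a + d) = 0 := by
        by_contra hne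
        obtain ⟨u, hu, v, hv, huv⟩ := mem_support_mul (Finsupp.mem_support_iff.mpr hne)
        obtain ⟨hup, huw⟩ := support_sub_wpart η w₀ p u hu
        have h1 : wt η (a + d) = wt η u + wt η v := by rw [huv, wt_add']
        rw [wt_add', haw, hdw] at h1
        have := hwmin u hup
        have := hq0 v hv
        omega
      have hmem : a + d ∈ (p * q).coeff.support := by
        rw [Finsupp.mem_support_iff, hsplit]
        show (wpart η w₀ p * wpart η 0 q).coeff (a + d) +
          ((wpart η w₀ p * (q - wpart η 0 q)).coeff (a + d) + ((p - wpart η w₀ p) * q).coeff (a + d)) ≠ 0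
        rw [hz1, hz2]
        simpa using Finsupp.mem_support_iff.mp he
      have hadM : a + d ∈ M := hpq _ hmem
      have hndM : -d ∈ M := hunit d hdq hdw
      have : a = a + d + -d := by abel
      exact ⟨a, hap, this ▸ add_mem hadM hndM⟩
    obtain ⟨a, ha, haM⟩ := step
    intro x hx
    by_cases hxa : x = a
    · exact hxa ▸ haM
    obtain ⟨pe, hpe⟩ : ∃ pe : AddMonoidAlgebra ℂ (Fin n → ℤ), pe = p.erase a := ⟨_, rfl⟩
    have herase : ∀ m ∈ (pe * q).coeff.support, m ∈ M := by
      intro m hm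
      have heq : pe * q = p * q - AddMonoidAlgebra.single a (p.coeff a) * q := by
        rw [hpe, ← sub_mul]; congr 1; rw [eq_sub_iff_add_eq, AddMonoidAlgebra.erase_add_single]
      rw [heq, AddMonoidAlgebra.coeff_sub] at hm
      rcases Finset.mem_union.mp (Finsupp.support_sub hm) with h | h
      · exact hpq m h
      · obtain ⟨u, hu, v, hv, huv⟩ := mem_support_mul h
        have hu' : u = a := Finset.mem_singleton.mp (Finsupp.support_single_subset (by simpa only [AddMonoidAlgebra.coeff_single] using hu))
        subst hu'
        exact huv ▸ add_mem haM (hqM v hv)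
    have hcard' : pe.coeff.support.card ≤ N := by
      rw [hpe, AddMonoidAlgebra.coeff_erase, Finsupp.support_erase]
      have := Finset.card_erase_of_mem ha
      omega
    exact ih pe hcard' herase x (by
      rw [hpe, AddMonoidAlgebra.coeff_erase, Finsupp.support_erase]; exact Finset.mem_erase.mpr ⟨hxa, hx⟩)

/-- Let `f` be a Laurent polynomial with support `A`, let `𝓕 = F ∩ A` be the points
of `A` on the face of `conv(A)` minimizing the linear form `η`, and let `b ∈ 𝓕`.
Then `t^{−b}·f` lies in the monoid algebra `ℂ[M_𝓕]` (its support is in `M_𝓕`), and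
the ideal generated by `f` in `ℂ[ℤⁿ]` intersected with `ℂ[M_𝓕]` is the principal
ideal of `ℂ[M_𝓕]` generated by `t^{−b}·f`. -/
theorem stmt17 {n : ℕ} (f : AddMonoidAlgebra ℂ (Fin n → ℤ)) (η : Fin n → ℤ)
    (F : Finset (Fin n → ℤ))
    (hF : F = f.coeff.support.filter (fun a => ∀ c ∈ f.coeff.support, wt η a ≤ wt η c))
    (b : Fin n → ℤ) (hb : b ∈ F) :
    (∀ m ∈ (AddMonoidAlgebra.single (-b) (1 : ℂ) * f).coeff.support, m ∈ Mface f.coeff.support F) ∧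
      ∀ g : AddMonoidAlgebra ℂ (Fin n → ℤ), (∀ m ∈ g.coeff.support, m ∈ Mface f.coeff.support F) →
        ((∃ h : AddMonoidAlgebra ℂ (Fin n → ℤ), g = h * f) ↔
          ∃ h : AddMonoidAlgebra ℂ (Fin n → ℤ),
            (∀ m ∈ h.coeff.support, m ∈ Mface f.coeff.support F) ∧
              g = h * (AddMonoidAlgebra.single (-b) (1 : ℂ) * f)) := by
  classical
  subst hF
  obtain ⟨hbf, hbmin⟩ := Finset.mem_filter.mp hb
  set F := f.coeff.support.filter (fun a => ∀ c ∈ f.coeff.support, wt η a ≤ wt η c) with hFdef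
  set M := Mface f.coeff.support F with hM
  set q : AddMonoidAlgebra ℂ (Fin n → ℤ) := AddMonoidAlgebra.single (-b) (1 : ℂ) * f with hq
  -- description of supp q
  have hqsupp : ∀ m ∈ q.coeff.support, ∃ a ∈ f.coeff.support, m = -b + a := by
    intro m hm
    have hne : q.coeff m ≠ 0 := Finsupp.mem_support_iff.mp hm
    rw [hq, AddMonoidAlgebra.coeff_single_mul_apply, one_mul] at hne
    refine ⟨-(-b) + m, Finsupp.mem_support_iff.mpr hne, by abel⟩
  have hsuppM : ∀ m ∈ q.coeff.support, m ∈ M := by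
    intro m hm
    obtain ⟨a, ha, rfl⟩ := hqsupp m hm
    have : -b + a = a - b := by abel
    rw [this]
    exact AddSubmonoid.subset_closure ⟨a, ha, b, hb, rfl⟩
  have hq0 : ∀ d ∈ q.coeff.support, 0 ≤ wt η d := by
    intro d hd
    obtain ⟨a, ha, rfl⟩ := hqsupp d hd
    have h1 : wt η (-b + a) + wt η b = wt η a := by
      rw [← wt_add']; congr 1; abel
    have := hbmin a ha
    omega
  have hqz : (0 : Fin n → ℤ) ∈ q.coeff.support := by
    rw [Finsupp.mem_support_iff, hq, AddMonoidAlgebra.coeff_single_mul_apply, one_mul, neg_neg,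
      add_zero]
    exact Finsupp.mem_support_iff.mp hbf
  have hunit : ∀ d ∈ q.coeff.support, wt η d = 0 → -d ∈ M := by
    intro d hd hdw
    obtain ⟨a, ha, rfl⟩ := hqsupp d hd
    have h1 : wt η (-b + a) + wt η b = wt η a := by
      rw [← wt_add']; congr 1; abel
    have haw : wt η a = wt η b := by omega
    have haF : a ∈ F := by
      rw [hFdef, Finset.mem_filter]
      exact ⟨ha, fun c hc => haw ▸ hbmin c hc⟩
    have : -(-b + a) = b - a := by abel
    rw [this]
    exact AddSubmonoid.subset_closure ⟨b, hbf, a, haF, rfl⟩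
  refine ⟨hsuppM, ?_⟩
  intro g hg
  constructor
  · rintro ⟨h, rfl⟩
    refine ⟨AddMonoidAlgebra.single b 1 * h, ?_, ?_⟩
    · -- supports in M
      have heq : AddMonoidAlgebra.single b 1 * h * q = h * f := by
        rw [hq]
        rw [show AddMonoidAlgebra.single b 1 * h * (AddMonoidAlgebra.single (-b) (1:ℂ) * f)
          = (AddMonoidAlgebra.single b 1 * AddMonoidAlgebra.single (-b) (1:ℂ)) * (h * f) by ring]
        rw [AddMonoidAlgebra.single_mul_single, add_neg_cancel, one_mul,
          ← AddMonoidAlgebra.one_def, one_mul]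
      exact key η M q hq0 hqz hunit hsuppM _ _ le_rfl (fun m hm => hg m (heq ▸ hm))
    · rw [hq]
      rw [show AddMonoidAlgebra.single b 1 * h * (AddMonoidAlgebra.single (-b) (1:ℂ) * f)
        = (AddMonoidAlgebra.single b 1 * AddMonoidAlgebra.single (-b) (1:ℂ)) * (h * f) by ring]
      rw [AddMonoidAlgebra.single_mul_single, add_neg_cancel, one_mul,
        ← AddMonoidAlgebra.one_def, one_mul]
  · rintro ⟨h, -, rfl⟩
    exact ⟨h * AddMonoidAlgebra.single (-b) 1, by rw [mul_assoc]⟩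
end
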